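/- Let A : Fin n → α and B : Fin m → α be monotone (non-decreasing) sequences in a linear order α, and let C : Fin (n + m) → α be the function determined by C(i + rankLow(A i, B)) = A i for all i : Fin n and C(j + rankHigh(B j, A)) = B j for all j : Fin m (well-defined since these positions form a bijection with Fin (n+m)). Then C is monotone (non-decreasing); i.e., the merge output determined by the low/high cross ranks is a correctly sorted merge of A and B. -/

import Mathlib

/-- `rankLow x B` is the number of elements of `B` that are strictly less than `x`. -/
def rankLow {α : Type*} [LinearOrder α] {m : ℕ} (x : α) (B : Fin m → α) : ℕ :=
  (Finset.univ.filter fun j => B j < x).card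

/-- `rankHigh x A` is the number of elements of `A` that are less than or equal to `x`. -/
def rankHigh {α : Type*} [LinearOrder α] {n : ℕ} (x : α) (A : Fin n → α) : ℕ :=
  (Finset.univ.filter fun i => A i ≤ x).card

section lemmas
variable {α : Type*} [LinearOrder α] {n m : ℕ}

lemma rankLow_le (x : α) (B : Fin m → α) : rankLow x B ≤ m := by
  simpa [rankLow] using (Finset.card_filter_le Finset.univ fun j => B j < x)

lemma rankHigh_le (x : α) (A : Fin n → α) : rankHigh x A ≤ n := by
  simpa [rankHigh] using (Finset.card_filter_le Finset.univ fun i => A i ≤ x)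

lemma rankLow_mono (B : Fin m → α) {x y : α} (h : x ≤ y) : rankLow x B ≤ rankLow y B :=
  Finset.card_le_card (fun j hj => by
    simp only [Finset.mem_filter] at *; exact ⟨hj.1, lt_of_lt_of_le hj.2 h⟩)

lemma rankHigh_mono (A : Fin n → α) {x y : α} (h : x ≤ y) : rankHigh x A ≤ rankHigh y A :=
  Finset.card_le_card (fun i hi => by
    simp only [Finset.mem_filter] at *; exact ⟨hi.1, le_trans hi.2 h⟩)

lemma lt_rankLow {B : Fin m → α} (hB : Monotone B) {x : α} {j : Fin m} (h : B j < x) :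
    (j : ℕ) + 1 ≤ rankLow x B := by
  have hsub : Finset.Iic j ⊆ Finset.univ.filter fun j' => B j' < x := fun j' hj' => by
    simp only [Finset.mem_Iic] at hj'
    simp only [Finset.mem_filter, Finset.mem_univ, true_and]
    exact lt_of_le_of_lt (hB hj') h
  have := Finset.card_le_card hsub
  rwa [Fin.card_Iic] at this

lemma rankLow_le_of {B : Fin m → α} (hB : Monotone B) {x : α} {j : Fin m} (h : x ≤ B j) :
    rankLow x B ≤ (j : ℕ) := by
  have hsub : (Finset.univ.filter fun j' => B j' < x) ⊆ Finset.Iio j := fun j' hj' => by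
    simp only [Finset.mem_filter, Finset.mem_univ, true_and] at hj'
    simp only [Finset.mem_Iio]
    by_contra hc
    exact absurd (hB (le_of_not_gt hc)) (not_le.mpr (lt_of_lt_of_le hj' h))
  have := Finset.card_le_card hsub
  rwa [Fin.card_Iio] at this

lemma le_rankHigh {A : Fin n → α} (hA : Monotone A) {x : α} {i : Fin n} (h : A i ≤ x) :
    (i : ℕ) + 1 ≤ rankHigh x A := by
  have hsub : Finset.Iic i ⊆ Finset.univ.filter fun i' => A i' ≤ x := fun i' hi' => by
    simp only [Finset.mem_Iic] at hi'
    simp only [Finset.mem_filter, Finset.mem_univ, true_and]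
    exact le_trans (hA hi') h
  have := Finset.card_le_card hsub
  rwa [Fin.card_Iic] at this

lemma rankHigh_le_of {A : Fin n → α} (hA : Monotone A) {x : α} {i : Fin n} (h : x < A i) :
    rankHigh x A ≤ (i : ℕ) := by
  have hsub : (Finset.univ.filter fun i' => A i' ≤ x) ⊆ Finset.Iio i := fun i' hi' => by
    simp only [Finset.mem_filter, Finset.mem_univ, true_and] at hi'
    simp only [Finset.mem_Iio]
    by_contra hc
    exact absurd (hA (le_of_not_gt hc)) (not_le.mpr (lt_of_le_of_lt hi' h))
  have := Finset.card_le_card hsub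
  rwa [Fin.card_Iio] at this

lemma merge_pos_surjective (A : Fin n → α) (B : Fin m → α) (hA : Monotone A) (hB : Monotone B) :
    ∀ k : Fin (n + m), (∃ i : Fin n, (k : ℕ) = (i : ℕ) + rankLow (A i) B) ∨
      (∃ j : Fin m, (k : ℕ) = (j : ℕ) + rankHigh (B j) A) := by
  set f : Fin n ⊕ Fin m → Fin (n + m) :=
    Sum.elim
      (fun i => ⟨(i : ℕ) + rankLow (A i) B,
        Nat.add_lt_add_of_lt_of_le i.2 (rankLow_le _ _)⟩)
      (fun j => ⟨(j : ℕ) + rankHigh (B j) A, by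
        have := Nat.add_lt_add_of_lt_of_le j.2 (rankHigh_le (B j) A)
        omega⟩) with hf
  have key : ∀ (i : Fin n) (j : Fin m),
      (i : ℕ) + rankLow (A i) B ≠ (j : ℕ) + rankHigh (B j) A := by
    intro i j heq
    rcases le_or_gt (A i) (B j) with h | h
    · have h1 := le_rankHigh hA h
      have h2 := rankLow_le_of hB h
      omega
    · have h1 := lt_rankLow hB h
      have h2 := rankHigh_le_of hA h
      omega
  have hinj : Function.Injective f := by
    rintro (i | j) (i' | j') h <;> simp only [hf, Sum.elim_inl, Sum.elim_inr, Fin.mk.injEq] at h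
    · rcases lt_trichotomy i i' with hlt | heq | hlt
      · have := rankLow_mono B (hA hlt.le)
        have : (i : ℕ) < i' := hlt
        omega
      · rw [heq]
      · have := rankLow_mono B (hA hlt.le)
        have : (i' : ℕ) < i := hlt
        omega
    · exact absurd h (key i j')
    · exact absurd h.symm (key i' j)
    · rcases lt_trichotomy j j' with hlt | heq | hlt
      · have := rankHigh_mono A (hB hlt.le)
        have : (j : ℕ) < j' := hlt
        omega
      · rw [heq]
      · have := rankHigh_mono A (hB hlt.le)
        have : (j' : ℕ) < j := hlt
        omega
  have hsurj : Function.Surjective f := by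
    have hcard : Fintype.card (Fin n ⊕ Fin m) = Fintype.card (Fin (n + m)) := by simp
    exact ((Fintype.bijective_iff_injective_and_card f).mpr ⟨hinj, hcard⟩).2
  intro k
  obtain ⟨s, hs⟩ := hsurj k
  rcases s with i | j
  · left; exact ⟨i, by rw [← hs]; simp [hf]⟩
  · right; exact ⟨j, by rw [← hs]; simp [hf]⟩

end lemmas

/-- If `C : Fin (n + m) → α` places `A i` at position `i + rankLow (A i) B` and `B j` at
position `j + rankHigh (B j) A`, then `C` is monotone: the merge output determined by
the cross ranks is a correctly sorted merge of `A` and `B`. -/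
theorem merge_output_monotone {α : Type*} [LinearOrder α] {n m : ℕ}
    (A : Fin n → α) (B : Fin m → α) (hA : Monotone A) (hB : Monotone B)
    (C : Fin (n + m) → α)
    (hCA : ∀ (i : Fin n) (k : Fin (n + m)),
      (k : ℕ) = (i : ℕ) + rankLow (A i) B → C k = A i)
    (hCB : ∀ (j : Fin m) (k : Fin (n + m)),
      (k : ℕ) = (j : ℕ) + rankHigh (B j) A → C k = B j) :
    Monotone C := by
  intro k k' hkk'
  have hkk'' : (k : ℕ) ≤ (k' : ℕ) := hkk'
  rcases merge_pos_surjective A B hA hB k with ⟨i, hi⟩ | ⟨j, hj⟩ <;>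
    rcases merge_pos_surjective A B hA hB k' with ⟨i', hi'⟩ | ⟨j', hj'⟩
  · rw [hCA i k hi, hCA i' k' hi']
    by_contra hc
    push_neg at hc
    have h1 := rankLow_mono B hc.le
    have h2 : (i' : ℕ) < i := by
      by_contra h
      exact absurd (hA (Fin.le_def.mpr (le_of_not_gt (fun hh => h (by exact_mod_cast hh)))))
        (not_le.mpr hc)
    omega
  · rw [hCA i k hi, hCB j' k' hj']
    by_contra hc
    push_neg at hc
    have h1 := lt_rankLow hB hc
    have h2 := rankHigh_le_of hA hc
    omega
  · rw [hCB j k hj, hCA i' k' hi']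
    by_contra hc
    push_neg at hc
    have h1 := le_rankHigh hA hc.le
    have h2 := rankLow_le_of hB hc.le
    omega
  · rw [hCB j k hj, hCB j' k' hj']
    by_contra hc
    push_neg at hc
    have h1 := rankHigh_mono A hc.le
    have h2 : (j' : ℕ) < j := by
      by_contra h
      exact absurd (hB (Fin.le_def.mpr (le_of_not_gt (fun hh => h (by exact_mod_cast hh)))))
        (not_le.mpr hc)
    omega
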